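/- Let intervals [ℓ_i, u_i] for i ∈ [n] be sorted in decreasing order of ℓ, fix i ∈ [k+1] with i ≤ k+1 ≤ n, let S_i = { j > i : u_j ≥ ℓ_i }, and suppose |S_i| ≥ k − (i−1). Then the feasible top-k sets containing {1,…,i−1} but not i are exactly the sets {1,…,i−1} ∪ A with A ⊆ S_i and |A| = k − (i−1). Consequently, for any p ∈ [0,1]^n, the minimum of ∑_{j ∈ T} p_j over such sets T equals ∑_{j=1}^{i−1} p_j plus the sum of the k−(i−1) smallest values of p over S_i. -/

import Mathlib

open Classical

/-- Rankings consistent with strict interval dominance. -/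
def FeasiblePerm (n : ℕ) (l u : Fin n → ℝ) : Set (Equiv.Perm (Fin n)) :=
  {σ | ∀ i j : Fin n, l i > u j → σ i < σ j}

/-- Feasible top-`k` sets (0-indexed ranks: rank `< k` means "in the top `k`"). -/
def FeasibleTopK (n k : ℕ) (l u : Fin n → ℝ) : Set (Finset (Fin n)) :=
  {T | T.card = k ∧ ∃ σ ∈ FeasiblePerm n l u, ∀ j ∈ T, (σ j : ℕ) < k}

-- construction of a permutation placing T on top
lemma compl_card_eq {n k : ℕ} (T : Finset (Fin n)) (hT : T.card = k) :
    Tᶜ.card = n - k := by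
  rw [Finset.card_compl, hT, Fintype.card_fin]

noncomputable def placeFun {n k : ℕ} (hkn : k ≤ n) (T : Finset (Fin n)) (hT : T.card = k) :
    Fin n → Fin n := fun j =>
  if h : j ∈ T then Fin.castLE hkn ((T.orderIsoOfFin hT).symm ⟨j, h⟩)
  else ⟨k + ((Tᶜ.orderIsoOfFin (compl_card_eq T hT)).symm
      ⟨j, Finset.mem_compl.2 h⟩ : Fin (n - k)),
    by have := ((Tᶜ.orderIsoOfFin (compl_card_eq T hT)).symm
      ⟨j, Finset.mem_compl.2 h⟩).isLt; omega⟩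

lemma placeFun_mem {n k : ℕ} (hkn : k ≤ n) (T : Finset (Fin n)) (hT : T.card = k)
    {j : Fin n} (h : j ∈ T) : (placeFun hkn T hT j : ℕ) < k := by
  simp only [placeFun, dif_pos h]
  exact ((T.orderIsoOfFin hT).symm ⟨j, h⟩).isLt

lemma placeFun_not_mem {n k : ℕ} (hkn : k ≤ n) (T : Finset (Fin n)) (hT : T.card = k)
    {j : Fin n} (h : j ∉ T) : k ≤ (placeFun hkn T hT j : ℕ) := by
  simp only [placeFun, dif_neg h]
  exact Nat.le_add_right _ _

lemma placeFun_lt_of_mem_lt {n k : ℕ} (hkn : k ≤ n) (T : Finset (Fin n)) (hT : T.card = k)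
    {a b : Fin n} (ha : a ∈ T) (hb : b ∈ T) (hab : a < b) :
    placeFun hkn T hT a < placeFun hkn T hT b := by
  simp only [placeFun, dif_pos ha, dif_pos hb]
  have : (T.orderIsoOfFin hT).symm ⟨a, ha⟩ < (T.orderIsoOfFin hT).symm ⟨b, hb⟩ := by
    rw [OrderIso.lt_iff_lt]; exact hab
  simp only [Fin.lt_def, Fin.coe_castLE] at this ⊢
  exact this

lemma placeFun_lt_of_not_mem_lt {n k : ℕ} (hkn : k ≤ n) (T : Finset (Fin n)) (hT : T.card = k)
    {a b : Fin n} (ha : a ∉ T) (hb : b ∉ T) (hab : a < b) :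
    placeFun hkn T hT a < placeFun hkn T hT b := by
  simp only [placeFun, dif_neg ha, dif_neg hb]
  have : (Tᶜ.orderIsoOfFin (compl_card_eq T hT)).symm ⟨a, Finset.mem_compl.2 ha⟩
      < (Tᶜ.orderIsoOfFin (compl_card_eq T hT)).symm ⟨b, Finset.mem_compl.2 hb⟩ := by
    rw [OrderIso.lt_iff_lt]; exact hab
  simp only [Fin.lt_def] at this ⊢
  omega

lemma placeFun_injective {n k : ℕ} (hkn : k ≤ n) (T : Finset (Fin n)) (hT : T.card = k) :
    Function.Injective (placeFun hkn T hT) := by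
  intro a b hab
  rcases lt_trichotomy a b with h | h | h
  · exfalso
    by_cases ha : a ∈ T <;> by_cases hb : b ∈ T
    · exact absurd hab (ne_of_lt (placeFun_lt_of_mem_lt hkn T hT ha hb h))
    · have h1 := placeFun_mem hkn T hT ha
      have h2 := placeFun_not_mem hkn T hT hb
      rw [hab] at h1; omega
    · have h1 := placeFun_not_mem hkn T hT ha
      have h2 := placeFun_mem hkn T hT hb
      rw [hab] at h1; omega
    · exact absurd hab (ne_of_lt (placeFun_lt_of_not_mem_lt hkn T hT ha hb h))
  · exact h
  · exfalso
    by_cases ha : a ∈ T <;> by_cases hb : b ∈ T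
    · exact absurd hab.symm (ne_of_lt (placeFun_lt_of_mem_lt hkn T hT hb ha h))
    · have h1 := placeFun_mem hkn T hT ha
      have h2 := placeFun_not_mem hkn T hT hb
      rw [hab] at h1; omega
    · have h1 := placeFun_not_mem hkn T hT ha
      have h2 := placeFun_mem hkn T hT hb
      rw [← hab] at h2; omega
    · exact absurd hab.symm (ne_of_lt (placeFun_lt_of_not_mem_lt hkn T hT hb ha h))

-- existence of a feasible permutation placing T on top
lemma exists_feasible_perm {n k : ℕ} (hkn : k ≤ n) (l u : Fin n → ℝ)
    (hsorted : ∀ a b : Fin n, a ≤ b → l b ≤ l a)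
    (hvalid : ∀ a : Fin n, l a ≤ u a)
    (T : Finset (Fin n)) (hT : T.card = k)
    (hcl : ∀ a b : Fin n, a ∉ T → b ∈ T → ¬ l a > u b) :
    ∃ σ ∈ FeasiblePerm n l u, ∀ j ∈ T, (σ j : ℕ) < k := by
  refine ⟨Equiv.ofBijective _ (Finite.injective_iff_bijective.1 (placeFun_injective hkn T hT)),
    ?_, fun j hj => placeFun_mem hkn T hT hj⟩
  intro a b hab
  have hvab : a < b := by
    by_contra h
    push_neg at h
    have := hsorted b a h
    have := hvalid b
    linarith
  show placeFun hkn T hT a < placeFun hkn T hT b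
  by_cases ha : a ∈ T <;> by_cases hb : b ∈ T
  · exact placeFun_lt_of_mem_lt hkn T hT ha hb hvab
  · have h1 := placeFun_mem hkn T hT ha
    have h2 := placeFun_not_mem hkn T hT hb
    rw [Fin.lt_def]; omega
  · exact absurd hab (hcl a b ha hb)
  · exact placeFun_lt_of_not_mem_lt hkn T hT ha hb hvab

-- if σ feasible places T (card k) on top and i ∉ T then σ i ≥ k
lemma rank_ge_of_not_mem {n k : ℕ} (T : Finset (Fin n)) (hT : T.card = k)
    (σ : Equiv.Perm (Fin n)) (hσT : ∀ j ∈ T, (σ j : ℕ) < k)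
    {i : Fin n} (hi : i ∉ T) : k ≤ (σ i : ℕ) := by
  by_contra h
  push_neg at h
  have himg : T.image σ = Finset.univ.filter (fun x : Fin n => (x : ℕ) < k) := by
    apply Finset.eq_of_subset_of_card_le
    · intro x hx
      simp only [Finset.mem_image] at hx
      obtain ⟨j, hj, rfl⟩ := hx
      simp [hσT j hj]
    · rw [Finset.card_image_of_injective _ σ.injective, hT]
      have hkn : k ≤ n := by
        have h0 := Finset.card_le_univ T
        simpa [hT, Finset.card_univ] using h0
      have hset : Finset.univ.filter (fun x : Fin n => (x : ℕ) < k)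
          = (Finset.univ : Finset (Fin k)).map (Fin.castLEEmb hkn) := by
        ext x
        constructor
        · intro hx
          simp only [Finset.mem_filter] at hx
          refine Finset.mem_map.2 ⟨⟨x, hx.2⟩, Finset.mem_univ _, ?_⟩
          simp [Fin.castLEEmb_apply, Fin.ext_iff]
        · intro hx
          obtain ⟨y, -, hy⟩ := Finset.mem_map.1 hx
          simp only [Finset.mem_filter, Finset.mem_univ, true_and]
          rw [← hy]
          simpa using y.isLt
      rw [hset, Finset.card_map, Finset.card_univ, Fintype.card_fin]
  have : σ i ∈ T.image σ := by rw [himg]; simp [h]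
  simp only [Finset.mem_image] at this
  obtain ⟨j, hj, hji⟩ := this
  exact hi (σ.injective hji ▸ hj)

/-- Intervals sorted by decreasing lower bound; `i` among the first `k+1`
indices; `S_i` the later intervals overlapping `i`, with `|S_i| ≥ k - (i-1)` (0-indexed:
`k - i`). Then the feasible top-`k` sets containing all indices before `i` but not `i`
are exactly the sets `{j : j < i} ∪ A` with `A ⊆ S_i`, `|A| = k - i`; consequently, for
any `p ∈ [0,1]^n`, the least sum `∑_{j ∈ T} p_j` over such `T` is `∑_{j < i} p_j` plus
the minimum (= sum of the `k - i` smallest values of `p` on `S_i`) over such `A`. -/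
theorem feasibleTopK_slice_characterization (n k : ℕ) (hk : 1 ≤ k) (hkn : k < n)
    (l u : Fin n → ℝ)
    (hsorted : ∀ a b : Fin n, a ≤ b → l b ≤ l a)
    (hvalid : ∀ a : Fin n, l a ≤ u a)
    (i : Fin n) (hi : (i : ℕ) ≤ k)
    (hScard : k - (i : ℕ) ≤
      (Finset.univ.filter (fun j : Fin n => i < j ∧ l i ≤ u j)).card) :
    ({T | T ∈ FeasibleTopK n k l u ∧ (∀ j : Fin n, j < i → j ∈ T) ∧ i ∉ T} =
      {T | ∃ A ⊆ Finset.univ.filter (fun j : Fin n => i < j ∧ l i ≤ u j),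
        A.card = k - (i : ℕ) ∧ T = Finset.univ.filter (fun j : Fin n => j < i) ∪ A}) ∧
    ∀ p : Fin n → ℝ, (∀ j, 0 ≤ p j ∧ p j ≤ 1) →
      IsLeast {x : ℝ | ∃ T ∈ FeasibleTopK n k l u,
          (∀ j : Fin n, j < i → j ∈ T) ∧ i ∉ T ∧ x = ∑ j ∈ T, p j}
        ((∑ j ∈ Finset.univ.filter (fun j : Fin n => j < i), p j) +
          sInf {x : ℝ | ∃ A ⊆ Finset.univ.filter (fun j : Fin n => i < j ∧ l i ≤ u j),
            A.card = k - (i : ℕ) ∧ x = ∑ j ∈ A, p j}) := by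
  set B := Finset.univ.filter (fun j : Fin n => j < i) with hB
  set S := Finset.univ.filter (fun j : Fin n => i < j ∧ l i ≤ u j) with hS
  have hBcard : B.card = (i : ℕ) := by
    have hBI : B = Finset.Iio i := by ext x; simp [hB]
    rw [hBI, Fin.card_Iio]
  have hBmem : ∀ j : Fin n, j ∈ B ↔ j < i := by intro j; simp [hB]
  have hSmem : ∀ j : Fin n, j ∈ S ↔ i < j ∧ l i ≤ u j := by intro j; simp [hS]
  have hdisj : ∀ A : Finset (Fin n), A ⊆ S → Disjoint B A := by
    intro A hAS
    rw [Finset.disjoint_left]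
    intro a haB haA
    have h1 := (hBmem a).1 haB
    have h2 := ((hSmem a).1 (hAS haA)).1
    exact absurd (h1.trans h2) (lt_irrefl a)
  -- the set equality
  have hEq : ({T | T ∈ FeasibleTopK n k l u ∧ (∀ j : Fin n, j < i → j ∈ T) ∧ i ∉ T} =
      {T | ∃ A ⊆ S, A.card = k - (i : ℕ) ∧ T = B ∪ A}) := by
    ext T
    simp only [Set.mem_setOf_eq]
    constructor
    · rintro ⟨⟨hTcard, σ, hσ, hσT⟩, hBsub, hiT⟩
      have hBT : B ⊆ T := fun j hj => hBsub j ((hBmem j).1 hj)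
      refine ⟨T \ B, ?_, ?_, ?_⟩
      · intro j hj
        rw [Finset.mem_sdiff] at hj
        obtain ⟨hjT, hjB⟩ := hj
        have hij : i < j := by
          rcases lt_trichotomy j i with h | h | h
          · exact absurd ((hBmem j).2 h) hjB
          · exact absurd (h ▸ hjT) hiT
          · exact h
        rw [hSmem]
        refine ⟨hij, ?_⟩
        by_contra hub
        push_neg at hub
        have hlt := hσ i j hub
        have h1 := hσT j hjT
        have h2 := rank_ge_of_not_mem T hTcard σ hσT hiT
        rw [Fin.lt_def] at hlt
        omega
      · rw [Finset.card_sdiff_of_subset hBT, hTcard, hBcard]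
      · exact (Finset.union_sdiff_of_subset hBT).symm
    · rintro ⟨A, hAS, hAcard, rfl⟩
      have hdisjA := hdisj A hAS
      have hiB : i ∉ B := by rw [hBmem]; exact lt_irrefl i
      have hiA : i ∉ A := fun h => absurd ((hSmem i).1 (hAS h)).1 (lt_irrefl i)
      have hcard : (B ∪ A).card = k := by
        rw [Finset.card_union_of_disjoint hdisjA, hBcard, hAcard]
        omega
      refine ⟨⟨hcard, ?_⟩, ?_, ?_⟩
      · apply exists_feasible_perm hkn.le l u hsorted hvalid _ hcard
        intro a b haT hbT hab
        have hub : l i ≤ u b := by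
          rcases Finset.mem_union.1 hbT with hbB | hbA
          · have hbi : b < i := (hBmem b).1 hbB
            have := hsorted b i hbi.le
            linarith [hvalid b]
          · exact ((hSmem b).1 (hAS hbA)).2
        have hai : a < i := by
          by_contra h
          push_neg at h
          have := hsorted i a h
          linarith
        exact haT (Finset.mem_union_left _ ((hBmem a).2 hai))
      · intro j hj
        exact Finset.mem_union_left _ ((hBmem j).2 hj)
      · intro h
        rcases Finset.mem_union.1 h with h | h
        · exact hiB h
        · exact hiA h
  refine ⟨hEq, ?_⟩
  intro p _
  set X : Set ℝ := {x | ∃ A ⊆ S, A.card = k - (i : ℕ) ∧ x = ∑ j ∈ A, p j} with hX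
  have hXfin : X.Finite := by
    have : X = ↑((S.powersetCard (k - (i : ℕ))).image (fun A => ∑ j ∈ A, p j)) := by
      ext x
      simp only [hX, Set.mem_setOf_eq, Finset.coe_image, Set.mem_image, Finset.mem_coe,
        Finset.mem_powersetCard]
      constructor
      · rintro ⟨A, h1, h2, rfl⟩; exact ⟨A, ⟨h1, h2⟩, rfl⟩
      · rintro ⟨A, ⟨h1, h2⟩, rfl⟩; exact ⟨A, h1, h2, rfl⟩
    rw [this]
    exact (Finset.image _ _).finite_toSet
  have hXne : X.Nonempty := by
    obtain ⟨A, hAS, hAcard⟩ := Finset.exists_subset_card_eq hScard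
    exact ⟨∑ j ∈ A, p j, A, hAS, hAcard, rfl⟩
  have hmem := hXne.csInf_mem hXfin
  obtain ⟨A₀, hA₀S, hA₀card, hA₀sum⟩ := hmem
  constructor
  · -- membership
    have hT₀ : (B ∪ A₀) ∈ {T | T ∈ FeasibleTopK n k l u ∧ (∀ j : Fin n, j < i → j ∈ T) ∧ i ∉ T} := by
      rw [hEq]
      exact ⟨A₀, hA₀S, hA₀card, rfl⟩
    obtain ⟨hFeas, hBsub, hiT⟩ := hT₀
    refine ⟨B ∪ A₀, hFeas, hBsub, hiT, ?_⟩
    rw [Finset.sum_union (hdisj A₀ hA₀S), ← hA₀sum]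
  · -- lower bound
    rintro x ⟨T, hTF, hBsub, hiT, rfl⟩
    have hT : T ∈ {T | T ∈ FeasibleTopK n k l u ∧ (∀ j : Fin n, j < i → j ∈ T) ∧ i ∉ T} :=
      ⟨hTF, hBsub, hiT⟩
    rw [hEq] at hT
    obtain ⟨A, hAS, hAcard, rfl⟩ := hT
    rw [Finset.sum_union (hdisj A hAS)]
    have hle : sInf X ≤ ∑ j ∈ A, p j :=
      csInf_le hXfin.bddBelow ⟨A, hAS, hAcard, rfl⟩
    linarith
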